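/- Let n ≥ 4 and let L^w be the n×n complex matrix in block form L^w = fromBlocks(L_{n−1}, 0, s, n−1), where L_{n−1} is the (n−1)×(n−1) directed-cycle Laplacian (1 on the diagonal, −1 in positions (i, i+1 mod n−1), 0 elsewhere), the top-right block is the zero column, s is the row vector of all ones of length n−1, and the bottom-right entry is n−1 (the Laplacian of the directed wheel graph on n vertices). Then: (a) n−1 is a root of the characteristic polynomial of L^w; and (b) every root μ of the characteristic polynomial of L^w with μ ≠ n−1 is of the form 1 − ζ for some (n−1)-th root of unity ζ, hence satisfies |μ| ≤ 2 < n−1. In particular n−1 is the strict dominant eigenvalue of L^w. -/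

import Mathlib

/-- The Laplacian matrix of the directed `m`-cycle: `1` on the diagonal, `-1` in
position `(i, i+1 mod m)`, `0` elsewhere. -/
def cycL (m : ℕ) : Matrix (Fin m) (Fin m) ℂ :=
  Matrix.of fun i j =>
    if (j : ℕ) = (i : ℕ) then 1 else if (j : ℕ) = ((i : ℕ) + 1) % m then -1 else 0

/-- The Laplacian matrix of the directed wheel graph on `n` vertices. -/
def wheelL (n : ℕ) : Matrix (Fin (n - 1) ⊕ Fin 1) (Fin (n - 1) ⊕ Fin 1) ℂ :=
  Matrix.fromBlocks (cycL (n - 1)) 0 (Matrix.of fun _ _ => 1)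
    (Matrix.of fun _ _ => (n : ℂ) - 1)

open Polynomial Matrix

lemma eval_charpoly_aux {k : Type*} [Fintype k] [DecidableEq k]
    (M : Matrix k k ℂ) (μ : ℂ) :
    M.charpoly.eval μ = (μ • (1 : Matrix k k ℂ) - M).det := by
  rw [Matrix.charpoly, ← Polynomial.coe_evalRingHom, RingHom.map_det]
  congr 1
  ext i j
  by_cases h : i = j <;>
    simp [h, Matrix.charmatrix_apply, Matrix.one_apply, Matrix.diagonal_apply]

lemma cyc_root {m : ℕ} (hm : 2 ≤ m) {μ : ℂ}
    (h : (μ • (1 : Matrix (Fin m) (Fin m) ℂ) - cycL m).det = 0) :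
    ∃ ζ : ℂ, ζ ^ m = 1 ∧ μ = 1 - ζ := by
  have hm0 : 0 < m := by omega
  obtain ⟨v, hv0, hv⟩ := (Matrix.exists_mulVec_eq_zero_iff).2 h
  set succ : Fin m → Fin m := fun i => ⟨((i : ℕ) + 1) % m, Nat.mod_lt _ hm0⟩ with hsucc
  have hne : ∀ i : Fin m, succ i ≠ i := by
    intro i hi
    have h1 : ((i : ℕ) + 1) % m = (i : ℕ) := congrArg Fin.val hi
    have h2 : (i : ℕ) + 1 < m ∨ (i : ℕ) + 1 = m := by omega
    rcases h2 with h2 | h2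
    · rw [Nat.mod_eq_of_lt h2] at h1; omega
    · rw [h2, Nat.mod_self] at h1; omega
  have hsum : ∀ i : Fin m, ∑ j, cycL m i j * v j = v i - v (succ i) := by
    intro i
    have hterm : ∀ j : Fin m, cycL m i j * v j =
        (if j = i then v i else 0) + (if j = succ i then -v (succ i) else 0) := by
      intro j
      by_cases h1 : j = i
      · subst h1
        have : (succ j) ≠ j := hne j
        simp [cycL, this.symm, Ne.symm this]
      · by_cases h2 : j = succ i
        · subst h2
          have hval : ((succ i : Fin m) : ℕ) ≠ (i : ℕ) := fun hc => hne i (Fin.ext hc)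
          simp [cycL, hval, h1]
          exact fun hc => (hc rfl).elim
        · have hv1 : ((j : Fin m) : ℕ) ≠ (i : ℕ) := fun hc => h1 (Fin.ext hc)
          have hv2 : ((j : Fin m) : ℕ) ≠ ((i : ℕ) + 1) % m := by
            intro hc
            exact h2 (Fin.ext hc)
          simp [cycL, hv1, hv2, h1, h2]
    rw [Finset.sum_congr rfl fun j _ => hterm j, Finset.sum_add_distrib]
    simp [Finset.sum_ite_eq']
    ring
  have key : ∀ i : Fin m, v (succ i) = (1 - μ) * v i := by
    intro i
    have h0 : ((μ • (1 : Matrix (Fin m) (Fin m) ℂ) - cycL m) *ᵥ v) i = 0 := by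
      rw [hv]; rfl
    rw [Matrix.sub_mulVec, Matrix.smul_mulVec, Matrix.one_mulVec] at h0
    have h1 : μ * v i - ∑ j, cycL m i j * v j = 0 := h0
    rw [hsum i] at h1
    linear_combination h1
  set ζ : ℂ := 1 - μ with hζ
  set f : ℕ → ℂ := fun k => v ⟨k % m, Nat.mod_lt _ hm0⟩ with hf
  have hstep : ∀ k : ℕ, f (k + 1) = ζ * f k := by
    intro k
    have h1 := key ⟨k % m, Nat.mod_lt _ hm0⟩
    have h2 : succ ⟨k % m, Nat.mod_lt _ hm0⟩ = ⟨(k + 1) % m, Nat.mod_lt _ hm0⟩ := by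
      apply Fin.ext
      simp [hsucc, Nat.mod_add_mod]
    rw [h2] at h1
    exact h1
  have hpow : ∀ k : ℕ, f k = ζ ^ k * f 0 := by
    intro k
    induction k with
    | zero => simp
    | succ k ih => rw [hstep k, ih]; ring
  have hfm : f m = f 0 := by simp [hf]
  rw [hpow m] at hfm
  by_cases hf0 : f 0 = 0
  · exfalso
    apply hv0
    funext j
    have : v j = f (j : ℕ) := by
      simp only [hf]
      congr 1
      exact Fin.ext (Nat.mod_eq_of_lt j.isLt).symm
    rw [this, hpow, hf0, mul_zero]
    rfl
  · exact ⟨ζ, mul_right_cancel₀ hf0 (by rw [one_mul]; exact hfm), by rw [hζ]; ring⟩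

theorem stmt19 (n : ℕ) (hn : 4 ≤ n) :
    (wheelL n).charpoly.IsRoot ((n : ℂ) - 1) ∧
      (∀ μ : ℂ, (wheelL n).charpoly.IsRoot μ → μ ≠ (n : ℂ) - 1 →
        (∃ ζ : ℂ, ζ ^ (n - 1) = 1 ∧ μ = 1 - ζ) ∧ ‖μ‖ ≤ 2) ∧
      (2 : ℝ) < (n : ℝ) - 1 := by
  have hm : 2 ≤ n - 1 := by omega
  have hcp : (wheelL n).charpoly =
      (cycL (n - 1)).charpoly * (Matrix.of fun _ _ => (n : ℂ) - 1 :
        Matrix (Fin 1) (Fin 1) ℂ).charpoly := by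
    rw [wheelL, Matrix.charpoly_fromBlocks_zero₁₂]
  have hD : ∀ μ : ℂ, (Matrix.of fun _ _ => (n : ℂ) - 1 :
      Matrix (Fin 1) (Fin 1) ℂ).charpoly.eval μ = μ - ((n : ℂ) - 1) := by
    intro μ
    rw [eval_charpoly_aux, Matrix.det_fin_one]
    simp [Matrix.one_apply]
  refine ⟨?_, ?_, ?_⟩
  · rw [Polynomial.IsRoot, hcp, Polynomial.eval_mul, hD]
    ring
  · intro μ hroot hne
    rw [Polynomial.IsRoot, hcp, Polynomial.eval_mul, hD] at hroot
    rcases mul_eq_zero.1 hroot with h | h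
    · rw [eval_charpoly_aux] at h
      obtain ⟨ζ, hζ1, hζ2⟩ := cyc_root hm h
      refine ⟨⟨ζ, hζ1, hζ2⟩, ?_⟩
      have hζn : ‖ζ‖ = 1 := Complex.norm_eq_one_of_pow_eq_one hζ1 (by omega)
      calc ‖μ‖ = ‖(1 : ℂ) - ζ‖ := by rw [hζ2]
        _ ≤ ‖(1 : ℂ)‖ + ‖ζ‖ := norm_sub_le _ _
        _ = 2 := by rw [hζn, norm_one]; norm_num
    · exact absurd (by linear_combination h) hne
  · have h4 : (4 : ℝ) ≤ (n : ℝ) := by exact_mod_cast hn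
    linarith
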